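/- Abstract stability of the two-step recursion: Suppose non-negative numbers (G_n)_{n=1}^N, (D_n)_{n=0}^N, (F_n)_{n=2}^N, constants ε, ϵ > 0 with ϵ + 10ε ≤ 1, τ > 0, α ≥ 0 satisfy, for n = 1,…,N−1, G_{n+1} − G_n + 4τ(1−ϵ) D_{n+1} ≤ 4τε(8D_n + 2D_{n−1}) + ατ( G_n + 32ετD_n + 8ετD_{n−1} ) + τ F_{n+1}. Then G_N + 40ετ D_N + 4τ(1−ϵ−10ε) ∑_{n=2}^N D_n ≤ e^{ατN} ( G_1 + 4τε(10 D_1 + 2 D_0) + τ ∑_{n=2}^N F_n ). -/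
import Mathlib


/-- Abstract stability of the two-step recursion (second-order coupled IMEX scheme):
if for `n = 1,…,N−1`,
`G_{n+1} − G_n + 4τ(1−ϵ)D_{n+1} ≤ 4τε(8D_n + 2D_{n−1}) + ατ(G_n + 32ετD_n + 8ετD_{n−1}) + τF_{n+1}`,
then `G_N + 40ετD_N + 4τ(1−ϵ−10ε)∑_{n=2}^N D_n ≤ e^{ατN}(G_1 + 4τε(10D_1 + 2D_0) + τ∑_{n=2}^N F_n)`. -/
theorem two_step_recursion_stability (N : ℕ) (hN : 2 ≤ N)
    (G D F : ℕ → ℝ) (ε ϵ τ α : ℝ)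
    (hε : 0 < ε) (hϵ : 0 < ϵ) (hεϵ : ϵ + 10 * ε ≤ 1) (hτ : 0 < τ) (hα : 0 ≤ α)
    (hG : ∀ n, 1 ≤ n → n ≤ N → 0 ≤ G n) (hD : ∀ n ≤ N, 0 ≤ D n)
    (hF : ∀ n, 2 ≤ n → n ≤ N → 0 ≤ F n)
    (hrec : ∀ n, 1 ≤ n → n < N →
      G (n + 1) - G n + 4 * τ * (1 - ϵ) * D (n + 1) ≤
        4 * τ * ε * (8 * D n + 2 * D (n - 1))
          + α * τ * (G n + 32 * ε * τ * D n + 8 * ε * τ * D (n - 1))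
          + τ * F (n + 1)) :
    G N + 40 * ε * τ * D N + 4 * τ * (1 - ϵ - 10 * ε) * ∑ n ∈ Finset.Icc 2 N, D n ≤
      Real.exp (α * τ * N) *
        (G 1 + 4 * τ * ε * (10 * D 1 + 2 * D 0) + τ * ∑ n ∈ Finset.Icc 2 N, F n) := by
  set c := 4 * τ * (1 - ϵ - 10 * ε) with hc
  have hc0 : 0 ≤ c := by nlinarith
  set H : ℕ → ℝ := fun n => G n + 40 * ε * τ * D n + 8 * ε * τ * D (n - 1) with hH
  have hατ : 0 ≤ α * τ := mul_nonneg hα hτ.le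
  have hHnn : ∀ m, 1 ≤ m → m ≤ N → 0 ≤ H m := by
    intro m h1 h2
    have hg := hG m h1 h2
    have hd := hD m h2
    have hd' := hD (m - 1) (le_trans (Nat.sub_le m 1) h2)
    have h8 : (0:ℝ) ≤ 8 * ε * τ := by positivity
    have h40 : (0:ℝ) ≤ 40 * ε * τ := by positivity
    simp only [hH]
    nlinarith [mul_nonneg h40 hd, mul_nonneg h8 hd']
  have hDsum : ∀ m, m ≤ N → 0 ≤ ∑ n ∈ Finset.Icc 2 m, D n := by
    intro m hm
    exact Finset.sum_nonneg fun i hi => hD i (le_trans (Finset.mem_Icc.mp hi).2 hm)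
  have hFsum : ∀ m, m ≤ N → 0 ≤ ∑ n ∈ Finset.Icc 2 m, F n := by
    intro m hm
    exact Finset.sum_nonneg fun i hi =>
      hF i (Finset.mem_Icc.mp hi).1 (le_trans (Finset.mem_Icc.mp hi).2 hm)
  have key : ∀ m, 1 ≤ m → m ≤ N →
      H m + c * ∑ n ∈ Finset.Icc 2 m, D n ≤
        (1 + α * τ) ^ (m - 1) * (H 1 + τ * ∑ n ∈ Finset.Icc 2 m, F n) := by
    intro m h1
    induction m, h1 using Nat.le_induction with
    | base =>
      intro _
      have : Finset.Icc 2 1 = (∅ : Finset ℕ) := by decide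
      simp [this]
    | succ m hm ih =>
      intro hm1N
      have hmN : m ≤ N := by omega
      have hr := hrec m hm (by omega)
      have hDm := hD m hmN
      have hDm1 := hD (m - 1) (le_trans (Nat.sub_le m 1) hmN)
      have hDm2 := hD (m + 1) hm1N
      have hFm : 0 ≤ F (m + 1) := hF (m + 1) (by omega) hm1N
      have hS := hDsum m hmN
      have p1 : (0:ℝ) ≤ α * τ * (8 * ε * τ) * D m := by
        exact mul_nonneg (by positivity) hDm
      have hstep : H (m + 1) + c * D (m + 1) ≤ (1 + α * τ) * H m + τ * F (m + 1) := by
        simp only [hH, Nat.add_sub_cancel]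
        nlinarith [hr, p1]
      have hsumD := Finset.sum_Icc_succ_top (by omega : 2 ≤ m + 1) D
      have hsumF := Finset.sum_Icc_succ_top (by omega : 2 ≤ m + 1) F
      have ihm := ih hmN
      have h1p : (1:ℝ) ≤ (1 + α * τ) ^ m := one_le_pow₀ (by linarith)
      calc H (m + 1) + c * ∑ n ∈ Finset.Icc 2 (m + 1), D n
          = (H (m + 1) + c * D (m + 1)) + c * ∑ n ∈ Finset.Icc 2 m, D n := by
            rw [hsumD]; ring
        _ ≤ (1 + α * τ) * H m + τ * F (m + 1) + c * ∑ n ∈ Finset.Icc 2 m, D n := by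
            linarith
        _ ≤ (1 + α * τ) * (H m + c * ∑ n ∈ Finset.Icc 2 m, D n) + τ * F (m + 1) := by
            nlinarith [mul_nonneg hατ (mul_nonneg hc0 hS)]
        _ ≤ (1 + α * τ) * ((1 + α * τ) ^ (m - 1) *
              (H 1 + τ * ∑ n ∈ Finset.Icc 2 m, F n)) + τ * F (m + 1) := by
            have := mul_le_mul_of_nonneg_left ihm (by linarith : (0:ℝ) ≤ 1 + α * τ)
            linarith
        _ = (1 + α * τ) ^ m * (H 1 + τ * ∑ n ∈ Finset.Icc 2 m, F n) + τ * F (m + 1) := by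
            rw [show (1 + α * τ) * ((1 + α * τ) ^ (m - 1) *
                  (H 1 + τ * ∑ n ∈ Finset.Icc 2 m, F n)) =
                (1 + α * τ) ^ (m - 1 + 1) * (H 1 + τ * ∑ n ∈ Finset.Icc 2 m, F n) by
                  rw [pow_succ]; ring,
              show m - 1 + 1 = m by omega]
        _ ≤ (1 + α * τ) ^ (m + 1 - 1) * (H 1 + τ * ∑ n ∈ Finset.Icc 2 (m + 1), F n) := by
            simp only [Nat.add_sub_cancel, hsumF]
            nlinarith [mul_nonneg (by linarith : (0:ℝ) ≤ (1 + α * τ) ^ m - 1)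
              (mul_nonneg hτ.le hFm)]
  have hK := key N (by omega) le_rfl
  have hQ : 0 ≤ H 1 + τ * ∑ n ∈ Finset.Icc 2 N, F n :=
    add_nonneg (hHnn 1 le_rfl (by omega)) (mul_nonneg hτ.le (hFsum N le_rfl))
  have hexp : (1 + α * τ) ^ (N - 1) ≤ Real.exp (α * τ * N) := by
    calc (1 + α * τ) ^ (N - 1) ≤ Real.exp (α * τ) ^ (N - 1) := by
          apply pow_le_pow_left₀ (by linarith)
          linarith [Real.add_one_le_exp (α * τ)]
      _ = Real.exp ((N - 1 : ℕ) * (α * τ)) := by rw [Real.exp_nat_mul]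
      _ ≤ Real.exp (α * τ * N) := by
          apply Real.exp_le_exp.mpr
          have : ((N - 1 : ℕ) : ℝ) ≤ (N : ℝ) := by
            exact_mod_cast Nat.sub_le N 1
          nlinarith
  have hmul := mul_le_mul_of_nonneg_right hexp hQ
  have hDN1 : 0 ≤ 8 * ε * τ * D (N - 1) :=
    mul_nonneg (by positivity) (hD (N - 1) (Nat.sub_le N 1))
  have hHN : H N = G N + 40 * ε * τ * D N + 8 * ε * τ * D (N - 1) := by simp [hH]
  have hH1 : Real.exp (α * τ * N) * (H 1 + τ * ∑ n ∈ Finset.Icc 2 N, F n) =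
      Real.exp (α * τ * N) *
        (G 1 + 4 * τ * ε * (10 * D 1 + 2 * D 0) + τ * ∑ n ∈ Finset.Icc 2 N, F n) := by
    simp only [hH]; ring_nf
  linarith [hK, hmul, hDN1, hHN.ge, hHN.le, hH1.ge, hH1.le]
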